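/- Under the same definitions of thresholds and constants α_{-L},...,α_L as in Algorithm 2 (with 0 < S_1 < ... < S_L < 1, 0 < T_1 < ... < T_L < 1, T_1 = S_1, T_l > S_l for l ≥ 2), the sequence is strictly monotone: α_L > α_{L-1} > ... > α_1 > α_0 = 1 > α_{-1} > ... > α_{-L} = 0. -/
import Mathlib


/-- The pair (α_{L−k}, α_{−(L−k)}) of constants of Algorithm 2, computed by downward
recursion from level L. -/
noncomputable def alphaPair (L : ℕ) (S T : ℕ → ℝ) : ℕ → ℝ × ℝ
  | 0 => (1 / S L, 0)
  | k + 1 =>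
      let p := alphaPair L S T k
      let l := L - (k + 1)
      let a := ((1 - S l) * T (l + 1) * p.1 + (1 - S l) * (1 - T (l + 1)) * p.2
                  - (1 - T (l + 1))) / (T (l + 1) - S l)
      (a, (1 - S l * a) / (1 - S l))

/-- The constants α_z, z ∈ {−L,…,L}, of Algorithm 2 (α_0 = 1). -/
noncomputable def alphaC (L : ℕ) (S T : ℕ → ℝ) (z : ℤ) : ℝ :=
  if z = 0 then 1
  else if 0 < z then (alphaPair L S T (L - z.toNat)).1
  else (alphaPair L S T (L - (-z).toNat)).2


private lemma mono_chain (L : ℕ) (f : ℕ → ℝ)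
    (h : ∀ l : ℕ, 1 ≤ l → l < L → f l < f (l + 1)) :
    ∀ i j : ℕ, 1 ≤ i → i < j → j ≤ L → f i < f j := by
  intro i j hi
  induction j with
  | zero => omega
  | succ n ih =>
    intro hij hjL
    rcases Nat.lt_or_ge i n with h' | h'
    · exact lt_trans (ih h' (by omega)) (h n (by omega) (by omega))
    · have : i = n := by omega
      subst this
      exact h i hi (by omega)

private lemma alpha_step (L : ℕ) (S T : ℕ → ℝ)
    (hS1 : 0 < S 1)
    (hSlt : ∀ i j : ℕ, 1 ≤ i → i < j → j ≤ L → S i < S j) (hSL : S L < 1)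
    (hTlt : ∀ i j : ℕ, 1 ≤ i → i < j → j ≤ L → T i < T j) (hTL : T L < 1)
    (hTS : ∀ l : ℕ, 2 ≤ l → l ≤ L → S l < T l)
    (k : ℕ) (hk : k + 2 ≤ L)
    (h1 : S (L - k) * (alphaPair L S T k).1 + (1 - S (L - k)) * (alphaPair L S T k).2 = 1)
    (h2 : (alphaPair L S T k).2 < (alphaPair L S T k).1) :
    (S (L - (k+1)) * (alphaPair L S T (k+1)).1
        + (1 - S (L - (k+1))) * (alphaPair L S T (k+1)).2 = 1
      ∧ (alphaPair L S T (k+1)).2 < (alphaPair L S T (k+1)).1)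
    ∧ (alphaPair L S T (k+1)).1 < (alphaPair L S T k).1
    ∧ (alphaPair L S T k).2 < (alphaPair L S T (k+1)).2 := by
  set a1 := (alphaPair L S T k).1 with ha1
  set b1 := (alphaPair L S T k).2 with hb1
  set a0 := (alphaPair L S T (k+1)).1 with ha0
  set b0 := (alphaPair L S T (k+1)).2 with hb0
  set l := L - (k+1) with hl
  have hll : L - k = l + 1 := by omega
  rw [hll] at h1
  -- basic bounds
  have hl1 : 1 ≤ l := by omega
  have hlL : l + 1 ≤ L := by omega
  have hS0pos : 0 < S l := by
    rcases Nat.lt_or_ge 1 l with h | h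
    · exact lt_trans hS1 (hSlt 1 l le_rfl (by omega) (by omega))
    · have : l = 1 := by omega
      rw [this]; exact hS1
  have hS01 : S l < S (l+1) := hSlt l (l+1) hl1 (by omega) hlL
  have hS1T : S (l+1) < T (l+1) := hTS (l+1) (by omega) hlL
  have hT0lt1 : T (l+1) < 1 := by
    rcases Nat.lt_or_ge (l+1) L with h | h
    · exact lt_trans (hTlt (l+1) L (by omega) h le_rfl) hTL
    · have : l + 1 = L := by omega
      rw [this]; exact hTL
  have hS0lt1 : S l < 1 := by linarith
  have hS0ne : (1 : ℝ) - S l ≠ 0 := by intro h; rw [sub_eq_zero] at h; linarith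
  have hTS0 : (0:ℝ) < T (l+1) - S l := by linarith
  have hTS0ne : T (l+1) - S l ≠ 0 := ne_of_gt hTS0
  -- unfold the recursion
  have hA : a0 = ((1 - S l) * T (l + 1) * a1 + (1 - S l) * (1 - T (l + 1)) * b1
                  - (1 - T (l + 1))) / (T (l + 1) - S l) := rfl
  have hB : b0 = (1 - S l * a0) / (1 - S l) := rfl
  have hca : (T (l+1) - S l) * a0 = (1 - S l) * T (l + 1) * a1
      + (1 - S l) * (1 - T (l + 1)) * b1 - (1 - T (l + 1)) := by
    rw [hA]; field_simp
  have hcb : (1 - S l) * b0 = 1 - S l * a0 := by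
    rw [hB]; field_simp
  -- key identities
  have hE2 : (T (l+1) - S (l+1)) * (a1 - b1) = T (l+1) * a1 + (1 - T (l+1)) * b1 - 1 := by
    linear_combination -h1
  have hm : 1 < T (l+1) * a1 + (1 - T (l+1)) * b1 := by
    nlinarith [mul_pos (show (0:ℝ) < T (l+1) - S (l+1) by linarith) (show (0:ℝ) < a1 - b1 by linarith)]
  have hE1' : (1 - S l) * ((T (l+1) - S l) * (a0 - b0))
      = (1 - S l) * (T (l+1) * a1 + (1 - T (l+1)) * b1 - 1) := by
    linear_combination hca - (T (l+1) - S l) * hcb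
  have hE1 : (T (l+1) - S l) * (a0 - b0) = T (l+1) * a1 + (1 - T (l+1)) * b1 - 1 :=
    mul_left_cancel₀ hS0ne hE1'
  have hI' : (1 - S l) * (T (l+1) * a0 + (1 - T (l+1)) * b0)
      = (1 - S l) * (T (l+1) * a1 + (1 - T (l+1)) * b1) := by
    linear_combination hca + (1 - T (l+1)) * hcb
  have hI : T (l+1) * a0 + (1 - T (l+1)) * b0 = T (l+1) * a1 + (1 - T (l+1)) * b1 :=
    mul_left_cancel₀ hS0ne hI'
  -- differences
  have hd0 : 0 < a0 - b0 := by nlinarith [hE1, hm, hTS0]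
  have hd01 : a0 - b0 < a1 - b1 := by
    nlinarith [hE1, hE2, mul_pos (show (0:ℝ) < S (l+1) - S l by linarith)
      (show (0:ℝ) < a1 - b1 by linarith), hTS0]
  have hAdiff : a1 - a0 = (1 - T (l+1)) * ((a1 - b1) - (a0 - b0)) := by
    linear_combination -hI
  have hBdiff : b0 - b1 = T (l+1) * ((a1 - b1) - (a0 - b0)) := by
    linear_combination hI
  have hT0pos : (0:ℝ) < T (l+1) := by linarith
  refine ⟨⟨by linear_combination hcb, by linarith⟩, ?_, ?_⟩
  · linarith [hAdiff, mul_pos (show (0:ℝ) < 1 - T (l+1) by linarith)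
      (show (0:ℝ) < (a1-b1)-(a0-b0) by linarith)]
  · linarith [hBdiff, mul_pos hT0pos (show (0:ℝ) < (a1-b1)-(a0-b0) by linarith)]

private lemma alpha_Q (L : ℕ) (S T : ℕ → ℝ)
    (hS1 : 0 < S 1)
    (hSlt : ∀ i j : ℕ, 1 ≤ i → i < j → j ≤ L → S i < S j) (hSL : S L < 1)
    (hTlt : ∀ i j : ℕ, 1 ≤ i → i < j → j ≤ L → T i < T j) (hTL : T L < 1)
    (hTS : ∀ l : ℕ, 2 ≤ l → l ≤ L → S l < T l) :
    ∀ k : ℕ, k + 1 ≤ L →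
      S (L - k) * (alphaPair L S T k).1 + (1 - S (L - k)) * (alphaPair L S T k).2 = 1
      ∧ (alphaPair L S T k).2 < (alphaPair L S T k).1 := by
  intro k
  induction k with
  | zero =>
    intro hk
    have hSLpos : 0 < S L := by
      rcases Nat.lt_or_ge 1 L with h | h
      · exact lt_trans hS1 (hSlt 1 L le_rfl h le_rfl)
      · have : L = 1 := by omega
        rw [this]; exact hS1
    have h0 : alphaPair L S T 0 = (1 / S L, 0) := rfl
    rw [h0]
    constructor
    · simp [Nat.sub_zero]
      field_simp
    · simp
      positivity
  | succ k ih =>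
    intro hk
    have h := ih (by omega)
    exact (alpha_step L S T hS1 hSlt hSL hTlt hTL hTS k (by omega) h.1 h.2).1

/-- Lemma 4: the constants of Algorithm 2 are strictly decreasing from
α_L down to α_{−L} = 0, with α_0 = 1. -/
theorem alpha_strict_monotone
    (L : ℕ) (hL : 1 ≤ L) (S T : ℕ → ℝ)
    (hS0 : 0 < S 1) (hSmono : ∀ l : ℕ, 1 ≤ l → l < L → S l < S (l + 1)) (hSL : S L < 1)
    (hT0 : 0 < T 1) (hTmono : ∀ l : ℕ, 1 ≤ l → l < L → T l < T (l + 1)) (hTL : T L < 1)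
    (hTS1 : T 1 = S 1) (hTS : ∀ l : ℕ, 2 ≤ l → l ≤ L → S l < T l) :
    (∀ z : ℤ, -(L : ℤ) ≤ z → z < L → alphaC L S T z < alphaC L S T (z + 1)) ∧
    alphaC L S T 0 = 1 ∧ alphaC L S T (-(L : ℤ)) = 0 := by
  have hSlt := mono_chain L S hSmono
  have hTlt := mono_chain L T hTmono
  have hQ := alpha_Q L S T hS0 hSlt hSL hTlt hTL hTS
  have hstep := alpha_step L S T hS0 hSlt hSL hTlt hTL hTS
  -- Q at level 1, i.e. k = L - 1
  have hQ1 := hQ (L - 1) (by omega)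
  have hL1 : L - (L - 1) = 1 := by omega
  rw [hL1] at hQ1
  have hS1lt1 : S 1 < 1 := by
    rcases Nat.lt_or_ge 1 L with h | h
    · exact lt_trans (hSlt 1 L le_rfl h le_rfl) hSL
    · have : L = 1 := by omega
      rw [← this]; exact hSL
  refine ⟨?_, ?_, ?_⟩
  · intro z hz1 hz2
    rcases lt_trichotomy z 0 with hz | hz | hz
    · -- z negative
      rcases eq_or_lt_of_le (show z ≤ -1 by omega) with hz' | hz'
      · -- z = -1 : goal alphaC (-1) < alphaC 0 = 1
        subst_vars
        have e0 : (-1 : ℤ) + 1 = 0 := by norm_num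
        rw [e0]
        have e1 : alphaC L S T (-1) = (alphaPair L S T (L - 1)).2 := by
          rw [alphaC, if_neg (by omega), if_neg (by omega)]
          norm_num
        have e2 : alphaC L S T 0 = 1 := by rw [alphaC, if_pos rfl]
        rw [e1, e2]
        nlinarith [hQ1.1, hQ1.2, hS0, hS1lt1]
      · -- z ≤ -2
        have hzn : 2 ≤ (-z).toNat := by omega
        have hznL : (-z).toNat ≤ L := by omega
        have e1 : alphaC L S T z = (alphaPair L S T (L - (-z).toNat)).2 := by
          rw [alphaC, if_neg (by omega), if_neg (by omega)]
        have e2 : alphaC L S T (z+1) = (alphaPair L S T (L - (-z).toNat + 1)).2 := by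
          rw [alphaC, if_neg (by omega), if_neg (by omega)]
          congr 2
          omega
        rw [e1, e2]
        have hQk := hQ (L - (-z).toNat) (by omega)
        exact (hstep (L - (-z).toNat) (by omega) hQk.1 hQk.2).2.2
    · -- z = 0 : goal 1 < alphaC 1
      subst hz
      have e2 : alphaC L S T 1 = (alphaPair L S T (L - 1)).1 := by
        rw [alphaC, if_neg (by omega), if_pos (by omega)]
        norm_num
      have e1 : alphaC L S T 0 = 1 := by rw [alphaC, if_pos rfl]
      rw [show ((0:ℤ)+1) = 1 by norm_num, e1, e2]
      nlinarith [hQ1.1, hQ1.2, hS0, hS1lt1]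
    · -- z ≥ 1
      have hz1' : 1 ≤ z.toNat := by omega
      have hzL : z.toNat + 1 ≤ L := by omega
      have e1 : alphaC L S T z = (alphaPair L S T (L - z.toNat)).1 := by
        rw [alphaC, if_neg (by omega), if_pos hz]
      have e2 : alphaC L S T (z+1) = (alphaPair L S T (L - z.toNat - 1)).1 := by
        rw [alphaC, if_neg (by omega), if_pos (by omega)]
        congr 2
        omega
      rw [e1, e2]
      have hk1 : L - z.toNat - 1 + 1 = L - z.toNat := by omega
      have hQk := hQ (L - z.toNat - 1) (by omega)
      have := (hstep (L - z.toNat - 1) (by omega) hQk.1 hQk.2).2.1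
      rwa [hk1] at this
  · rw [alphaC, if_pos rfl]
  · rw [alphaC, if_neg (by omega), if_neg (by omega)]
    have : L - (- -(L:ℤ)).toNat = 0 := by simp
    rw [this]
    rfl
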